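/- Let n = f_{m+2} - 1 with m ≥ 1, s a positive integer, and A : {0,...,n} → ℝ with A_i ≥ 0, A_0 = 1, ∑_i A_i = 2^s, satisfying the LP constraints A_1 = ⟨3n - 4x⟩, A_2 = (1/2)⟨(4x - 3n + 1)² - 3n - 1⟩, and ∑_{i even} A_i ≥ 2^{s-1}. Then 2^s > 3n + 4, i.e., s ≥ 2m + 5. -/

import Mathlib

set_option maxHeartbeats 1000000


def f (m : ℕ) : ℕ := (4 ^ m - 1) / 3

/-- The quadratic `16 (i - 3n/4)(i - 3n/4 - 1)` used in the LP argument. -/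
noncomputable def Qfun (n i : ℕ) : ℝ :=
  16 * ((i : ℝ) - 3 * n / 4) * ((i : ℝ) - 3 * n / 4 - 1)

theorem lp_bound_fm2_sub_one (m : ℕ) (hm : 1 ≤ m) (n : ℕ)
    (hn : n = f (m + 2) - 1)
    (s : ℕ) (hs : 1 ≤ s) (A : ℕ → ℝ)
    (hA0 : A 0 = 1)
    (hApos : ∀ i ≤ n, 0 ≤ A i)
    (hAsum : ∑ i ∈ Finset.range (n + 1), A i = 2 ^ s)
    (hA1 : A 1 = (1 / 2 ^ s) * ∑ i ∈ Finset.range (n + 1), (3 * n - 4 * i : ℝ) * A i)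
    (hA2 : A 2 = (1 / 2 ^ s) * ∑ i ∈ Finset.range (n + 1),
      (1 / 2) * ((4 * i - 3 * n + 1 : ℝ) ^ 2 - 3 * n - 1) * A i)
    (hEven : ∑ i ∈ (Finset.range (n + 1)).filter (fun i => Even i), A i
      ≥ 2 ^ (s - 1)) :
    (2 : ℝ) ^ s > 3 * n + 4 ∧ 2 * m + 5 ≤ s := by
  -- ## Natural number facts
  have h34 : 3 * n + 4 = 4 ^ (m + 2) := by
    have hdvd : 3 ∣ 4 ^ (m + 2) - 1 := by
      have h : (4 : ℕ) ^ (m + 2) ≡ 1 ^ (m + 2) [MOD 3] := Nat.ModEq.pow _ (by decide)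
      simpa using (Nat.modEq_iff_dvd' (Nat.one_le_pow _ _ (by norm_num))).mp
        (by simpa using h.symm)
    obtain ⟨k, hk⟩ := hdvd
    have h64 : 64 ≤ 4 ^ (m + 2) := by
      calc (64:ℕ) = 4 ^ 3 := by norm_num
      _ ≤ 4 ^ (m + 2) := Nat.pow_le_pow_right (by norm_num) (by omega)
    have hf : f (m + 2) = k := by
      rw [f, hk, Nat.mul_div_cancel_left _ (by norm_num)]
    rw [hf] at hn
    omega
  have hpow : 4 ^ (m + 2) = 4 * 4 ^ (m + 1) := by ring
  have h16 : 16 ≤ 4 ^ (m + 1) := by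
    calc (16:ℕ) = 4 ^ 2 := by norm_num
    _ ≤ 4 ^ (m + 1) := Nat.pow_le_pow_right (by norm_num) (by omega)
  set l : ℕ := 4 ^ (m + 1) - 1 with hldef
  have h4l : 4 * l = 3 * n := by omega
  have hn20 : 20 ≤ n := by omega
  have hl15 : 15 ≤ l := by omega
  have hln : l + 1 ≤ n := by omega
  have hlodd : l % 2 = 1 := by
    have h2 : 2 ∣ 4 ^ (m + 1) := dvd_pow (by norm_num) (by omega)
    omega
  -- ## Real casts
  have hnR : (20 : ℝ) ≤ (n : ℝ) := by exact_mod_cast hn20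
  have hlR : (l : ℝ) * 4 = 3 * (n : ℝ) := by exact_mod_cast by omega
  have hNpos : (0 : ℝ) < 2 ^ s := by positivity
  -- ## Sum identities from hA1, hA2
  have hS1 : ∑ i ∈ Finset.range (n + 1), (3 * n - 4 * i : ℝ) * A i = 2 ^ s * A 1 := by
    rw [hA1]; field_simp
  have hS2 : ∑ i ∈ Finset.range (n + 1), ((4 * i - 3 * n + 1 : ℝ) ^ 2 - 3 * n - 1) * A i
      = 2 * (2 ^ s * A 2) := by
    have h : ∑ i ∈ Finset.range (n + 1),
        (1 / 2) * ((4 * i - 3 * n + 1 : ℝ) ^ 2 - 3 * n - 1) * A i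
        = (1 / 2) * ∑ i ∈ Finset.range (n + 1),
            ((4 * i - 3 * n + 1 : ℝ) ^ 2 - 3 * n - 1) * A i := by
      rw [Finset.mul_sum]; exact Finset.sum_congr rfl fun i _ => by ring
    rw [hA2, h]; field_simp
  -- ## The key LP identity
  have I1 : ∑ i ∈ Finset.range (n + 1), Qfun n i * A i
      = 3 * n * 2 ^ s + 6 * (2 ^ s * A 1) + 2 * (2 ^ s * A 2) := by
    have hterm : ∀ i ∈ Finset.range (n + 1), Qfun n i * A i =
        3 * (n : ℝ) * A i + 6 * ((3 * n - 4 * i : ℝ) * A i)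
          + ((4 * i - 3 * n + 1 : ℝ) ^ 2 - 3 * n - 1) * A i := by
      intro i _; rw [Qfun]; ring
    rw [Finset.sum_congr rfl hterm, Finset.sum_add_distrib, Finset.sum_add_distrib,
      ← Finset.mul_sum, ← Finset.mul_sum, hAsum, hS1, hS2]
  -- ## Nonnegativity of Qfun at integers
  have hQnn : ∀ i : ℕ, 0 ≤ Qfun n i := by
    intro i
    rw [Qfun]
    rcases le_or_gt i l with h | h
    · have h1 : (i : ℝ) ≤ l := by exact_mod_cast h
      nlinarith
    · have h1 : (l : ℝ) + 1 ≤ i := by exact_mod_cast h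
      nlinarith
  have hQpos : ∀ i : ℕ, i ≠ l → i ≠ l + 1 → 1 ≤ Qfun n i := by
    intro i h1 h2
    rw [Qfun]
    rcases (by omega : i + 1 ≤ l ∨ l + 2 ≤ i) with h | h
    · have h1 : (i : ℝ) + 1 ≤ l := by exact_mod_cast h
      nlinarith
    · have h1 : (l : ℝ) + 2 ≤ i := by exact_mod_cast h
      nlinarith
  -- values of Qfun
  have hQ0 : Qfun n 0 = 3 * (n : ℝ) * (3 * n + 4) := by rw [Qfun]; push_cast; ring
  have hQ1 : Qfun n 1 = 9 * (n : ℝ) ^ 2 - 12 * n := by rw [Qfun]; push_cast; ring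
  have hQ2 : Qfun n 2 = 9 * (n : ℝ) ^ 2 - 36 * n + 32 := by rw [Qfun]; push_cast; ring
  -- ## Main inequality
  have hmain : (3 : ℝ) * n + 4 < 2 ^ s := by
    by_contra hcon
    push_neg at hcon
    have hsub : ({0, 1, 2} : Finset ℕ) ⊆ Finset.range (n + 1) := by
      intro i hi
      simp only [Finset.mem_insert, Finset.mem_singleton] at hi
      simp only [Finset.mem_range]
      omega
    have hsplit := Finset.sum_sdiff (f := fun i => Qfun n i * A i) hsub
    have h012 : ∑ i ∈ ({0, 1, 2} : Finset ℕ), Qfun n i * A i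
        = Qfun n 0 * 1 + Qfun n 1 * A 1 + Qfun n 2 * A 2 := by
      rw [Finset.sum_insert (by decide), Finset.sum_insert (by decide),
        Finset.sum_singleton, hA0]
      ring
    set D := ∑ i ∈ Finset.range (n + 1) \ ({0, 1, 2} : Finset ℕ), Qfun n i * A i with hDdef
    have hmem : ∀ i ∈ Finset.range (n + 1) \ ({0, 1, 2} : Finset ℕ), i ≤ n := by
      intro i hi
      have h1 := Finset.mem_range.mp (Finset.mem_sdiff.mp hi).1
      omega
    have hDnn : 0 ≤ D :=
      Finset.sum_nonneg fun i hi => mul_nonneg (hQnn i) (hApos i (hmem i hi))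
    have hsplit' : D + (Qfun n 0 * 1 + Qfun n 1 * A 1 + Qfun n 2 * A 2)
        = 3 * n * 2 ^ s + 6 * (2 ^ s * A 1) + 2 * (2 ^ s * A 2) := by
      rw [← h012, ← I1]
      exact hsplit
    have hkey : (Qfun n 1 - 6 * 2 ^ s) * A 1 + (Qfun n 2 - 2 * 2 ^ s) * A 2 + D
        = 3 * n * ((2:ℝ) ^ s - (3 * n + 4)) := by
      linear_combination hsplit' - hQ0
    have hc1 : 0 < Qfun n 1 - 6 * 2 ^ s := by
      rw [hQ1]; nlinarith [hcon, hnR, sq_nonneg ((n : ℝ) - 20)]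
    have hc2 : 0 < Qfun n 2 - 2 * 2 ^ s := by
      rw [hQ2]; nlinarith [hcon, hnR, sq_nonneg ((n : ℝ) - 20)]
    have hA1nn := hApos 1 (by omega)
    have hA2nn := hApos 2 (by omega)
    have ht1 : 0 ≤ (Qfun n 1 - 6 * 2 ^ s) * A 1 := mul_nonneg hc1.le hA1nn
    have ht2 : 0 ≤ (Qfun n 2 - 2 * 2 ^ s) * A 2 := mul_nonneg hc2.le hA2nn
    have hRnn : 0 ≤ 3 * (n : ℝ) * ((2:ℝ) ^ s - (3 * n + 4)) := by linarith [hkey]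
    have hNeq : (2 : ℝ) ^ s = 3 * n + 4 := by
      refine le_antisymm hcon ?_
      nlinarith [hRnn, hnR]
    have hR0 : 3 * (n : ℝ) * ((2:ℝ) ^ s - (3 * n + 4)) = 0 := by rw [hNeq]; ring
    have ht1z : (Qfun n 1 - 6 * 2 ^ s) * A 1 = 0 := by linarith [hkey, hR0, ht2, hDnn]
    have ht2z : (Qfun n 2 - 2 * 2 ^ s) * A 2 = 0 := by linarith [hkey, hR0, ht1, hDnn]
    have hDz : D = 0 := by linarith [hkey, hR0, ht1, ht2]
    have hA1z : A 1 = 0 := by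
      rcases mul_eq_zero.mp ht1z with h | h
      · exact absurd h hc1.ne'
      · exact h
    have hA2z : A 2 = 0 := by
      rcases mul_eq_zero.mp ht2z with h | h
      · exact absurd h hc2.ne'
      · exact h
    have hDzero : ∀ i ∈ Finset.range (n + 1) \ ({0, 1, 2} : Finset ℕ), Qfun n i * A i = 0 :=
      (Finset.sum_eq_zero_iff_of_nonneg
        fun i hi => mul_nonneg (hQnn i) (hApos i (hmem i hi))).mp hDz
    have hAz : ∀ i, i ≤ n → i ≠ 0 → i ≠ l → i ≠ l + 1 → A i = 0 := by
      intro i hi h0 hl1 hl2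
      rcases (by omega : i = 1 ∨ i = 2 ∨ 3 ≤ i) with h | h | h
      · rw [h]; exact hA1z
      · rw [h]; exact hA2z
      · have hiK : i ∈ Finset.range (n + 1) \ ({0, 1, 2} : Finset ℕ) := by
          simp only [Finset.mem_sdiff, Finset.mem_range, Finset.mem_insert,
            Finset.mem_singleton]
          omega
        rcases mul_eq_zero.mp (hDzero i hiK) with hq | ha
        · exfalso
          have h1 := hQpos i hl1 hl2
          rw [hq] at h1
          norm_num at h1
        · exact ha
    -- compute A (l+1) from hS1
    have hsubl : ({0, l, l + 1} : Finset ℕ) ⊆ Finset.range (n + 1) := by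
      intro i hi
      simp only [Finset.mem_insert, Finset.mem_singleton] at hi
      simp only [Finset.mem_range]
      omega
    have hSsum : ∑ i ∈ ({0, l, l + 1} : Finset ℕ), (3 * n - 4 * i : ℝ) * A i
        = ∑ i ∈ Finset.range (n + 1), (3 * n - 4 * i : ℝ) * A i := by
      apply Finset.sum_subset hsubl
      intro i hi hni
      have h1 : i < n + 1 := Finset.mem_range.mp hi
      simp only [Finset.mem_insert, Finset.mem_singleton] at hni
      push_neg at hni
      rw [hAz i (by omega) hni.1 hni.2.1 hni.2.2, mul_zero]
    have hset : ∑ i ∈ ({0, l, l + 1} : Finset ℕ), (3 * n - 4 * i : ℝ) * A i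
        = 3 * (n : ℝ) * 1 + (3 * (n : ℝ) - 4 * l) * A l
          + (3 * (n : ℝ) - 4 * l - 4) * A (l + 1) := by
      rw [Finset.sum_insert (by simp only [Finset.mem_insert, Finset.mem_singleton]; omega),
        Finset.sum_insert (by simp only [Finset.mem_singleton]; omega),
        Finset.sum_singleton, hA0]
      push_cast
      ring
    have hl0 : 3 * (n : ℝ) - 4 * l = 0 := by linarith [hlR]
    have hAl1 : A (l + 1) = 3 * (n : ℝ) / 4 := by
      have h := hSsum.trans hS1
      rw [hset, hA1z, mul_zero, hl0, zero_mul] at h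
      ring_nf at h ⊢
      linarith [h]
    -- even-weight contradiction
    have hl1even : Even (l + 1) := by rw [Nat.even_iff]; omega
    have hsubE : ({0, l + 1} : Finset ℕ) ⊆ (Finset.range (n + 1)).filter (fun i => Even i) := by
      intro i hi
      simp only [Finset.mem_insert, Finset.mem_singleton] at hi
      rcases hi with h | h
      · subst h
        simp only [Finset.mem_filter, Finset.mem_range]
        exact ⟨by omega, Even.zero⟩
      · subst h
        simp only [Finset.mem_filter, Finset.mem_range]
        exact ⟨by omega, hl1even⟩
    have hEsum : ∑ i ∈ ({0, l + 1} : Finset ℕ), A i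
        = ∑ i ∈ (Finset.range (n + 1)).filter (fun i => Even i), A i := by
      apply Finset.sum_subset hsubE
      intro i hi hni
      simp only [Finset.mem_filter, Finset.mem_range] at hi
      simp only [Finset.mem_insert, Finset.mem_singleton] at hni
      push_neg at hni
      have hieven : i % 2 = 0 := Nat.even_iff.mp hi.2
      exact hAz i (by omega) hni.1 (by omega) hni.2
    have hEval : ∑ i ∈ ({0, l + 1} : Finset ℕ), A i = 1 + 3 * (n : ℝ) / 4 := by
      rw [Finset.sum_insert (by simp only [Finset.mem_singleton]; omega),
        Finset.sum_singleton, hA0, hAl1]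
    have hEfin : 1 + 3 * (n : ℝ) / 4 ≥ 2 ^ (s - 1) := by
      rw [← hEval, hEsum]; exact hEven
    have hpow2 : (2 : ℝ) ^ (s - 1) * 2 = 2 ^ s := by
      rw [← pow_succ]
      congr 1
      omega
    linarith [hEfin, hpow2, hNeq, hnR]
  -- ## Conclusion
  have hcast34 : ((3 * n + 4 : ℕ) : ℝ) = 3 * (n : ℝ) + 4 := by push_cast; ring
  have h2pow : (2 : ℝ) ^ (2 * m + 4) = 3 * (n : ℝ) + 4 := by
    rw [← hcast34, h34]
    push_cast
    rw [show 2 * m + 4 = 2 * (m + 2) by ring, pow_mul]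
    norm_num
  refine ⟨hmain, ?_⟩
  by_contra hcon
  push_neg at hcon
  have hle : (2 : ℝ) ^ s ≤ 2 ^ (2 * m + 4) :=
    pow_le_pow_right₀ (by norm_num) (by omega)
  rw [h2pow] at hle
  linarith [hmain, hle]
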